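/- Let Λ be a numerical semigroup of rank k = k(Λ) with conductor c = c(Λ), and let λ_s be a minimal generator of Λ with λ_s > c (so s > k); set Λ̃ = Λ∖{λ_s}, a numerical semigroup with conductor λ_s + 1 and rank s. Then for every p with k ≤ p ≤ s−1, the set of order-p seeds of Λ̃ (seeds taken with respect to Λ̃) is: {λ_s+1, λ_s+2} if p = s−1; {λ_s+1} if p = s−2; and empty if k ≤ p < s−2. -/
import Mathlib


/-- A numerical semigroup: a cofinite submonoid of ℕ, viewed as a set of naturals. -/
def IsNumericalSemigroup (S : Set ℕ) : Prop :=
  0 ∈ S ∧ (∀ a ∈ S, ∀ b ∈ S, a + b ∈ S) ∧ ∃ N : ℕ, ∀ n : ℕ, N ≤ n → n ∈ S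

/-- The conductor: the smallest `N` such that every `n ≥ N` belongs to `S`. -/
noncomputable def sgConductor (S : Set ℕ) : ℕ :=
  sInf {N : ℕ | ∀ n : ℕ, N ≤ n → n ∈ S}

/-- The genus: the number of gaps. -/
noncomputable def sgGenus (S : Set ℕ) : ℕ :=
  Sᶜ.ncard

/-- The rank `k(Λ) = c(Λ) - g(Λ)`. -/
noncomputable def sgRank (S : Set ℕ) : ℕ :=
  sgConductor S - sgGenus S

/-- The multiplicity: the smallest nonzero element. -/
noncomputable def sgMultiplicity (S : Set ℕ) : ℕ :=
  sInf {n : ℕ | n ∈ S ∧ n ≠ 0}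

/-- The Frobenius number: the largest gap, i.e. the conductor minus one. -/
noncomputable def sgFrobenius (S : Set ℕ) : ℕ :=
  sgConductor S - 1

/-- `sgElem S j` is the element `λ_j` of `S = {λ_0 = 0 < λ_1 < λ_2 < ⋯}`. -/
noncomputable def sgElem (S : Set ℕ) (j : ℕ) : ℕ :=
  Nat.nth (· ∈ S) j

/-- The jump `u_j = λ_{j+1} - λ_j`. -/
noncomputable def sgJump (S : Set ℕ) (j : ℕ) : ℕ :=
  sgElem S (j + 1) - sgElem S j

/-- The left elements: elements of `S` smaller than the Frobenius number. -/
def sgLeftElements (S : Set ℕ) : Set ℕ :=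
  {x : ℕ | x ∈ S ∧ x + 1 < sgConductor S}

/-- A minimal generator: a nonzero element not the sum of two nonzero elements. -/
def IsMinimalGenerator (S : Set ℕ) (x : ℕ) : Prop :=
  x ∈ S ∧ x ≠ 0 ∧ ¬ ∃ a ∈ S, ∃ b ∈ S, a ≠ 0 ∧ b ≠ 0 ∧ a + b = x

/-- A right generator: a minimal generator larger than the Frobenius number. -/
def IsRightGenerator (S : Set ℕ) (x : ℕ) : Prop :=
  IsMinimalGenerator S x ∧ sgFrobenius S < x

/-- A strong generator: a right generator `μ` such that `μ + m(Λ)` is a minimal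
generator of `Λ ∖ {μ}`. -/
noncomputable def IsStrongGenerator (S : Set ℕ) (x : ℕ) : Prop :=
  IsRightGenerator S x ∧ IsMinimalGenerator (S \ {x}) (x + sgMultiplicity S)

/-- A new generator of `Λ`: a minimal generator of `Λ` that is not a minimal
generator of `Λ ∪ {F(Λ)}`. -/
noncomputable def IsNewGenerator (S : Set ℕ) (x : ℕ) : Prop :=
  IsMinimalGenerator S x ∧ ¬ IsMinimalGenerator (S ∪ {sgFrobenius S}) x

/-- `x` (an element `λ_s ≥ c(Λ)`) is an order-`p` seed of `Λ` if
`x + λ_p ≠ λ_i + λ_j` for all `p < i ≤ j < s`, i.e. for all `i ≤ j` with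
`p < i` and `λ_j < x`. -/
noncomputable def IsSeed (S : Set ℕ) (p x : ℕ) : Prop :=
  sgConductor S ≤ x ∧ ∀ i j : ℕ, p < i → i ≤ j → sgElem S j < x →
    x + sgElem S p ≠ sgElem S i + sgElem S j

/-- `T` is a child of `S`: obtained by removing one right generator. -/
def IsChild (T S : Set ℕ) : Prop :=
  ∃ μ : ℕ, IsRightGenerator S μ ∧ T = S \ {μ}

/-- A grandchild: a child of a child. -/
def IsGrandchild (T S : Set ℕ) : Prop :=
  ∃ C : Set ℕ, IsChild C S ∧ IsChild T C

/-- A great-grandchild: a child of a grandchild. -/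
def IsGreatGrandchild (T S : Set ℕ) : Prop :=
  ∃ C : Set ℕ, IsGrandchild C S ∧ IsChild T C

/-- `⟨a,b,c,…⟩|_κ`: the smallest numerical semigroup containing a given set. -/
def sgClosure (A : Set ℕ) : Set ℕ :=
  ⋂₀ {S : Set ℕ | IsNumericalSemigroup S ∧ A ⊆ S}


lemma sg_mem_of_conductor_le {S : Set ℕ} (hN : ∃ N : ℕ, ∀ n : ℕ, N ≤ n → n ∈ S) :
    ∀ n, sgConductor S ≤ n → n ∈ S :=
  Nat.sInf_mem (s := {N : ℕ | ∀ n : ℕ, N ≤ n → n ∈ S}) hN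

lemma sg_conductor_eq {T : Set ℕ} {N : ℕ} (h1 : ∀ n, N + 1 ≤ n → n ∈ T) (h2 : N ∉ T) :
    sgConductor T = N + 1 := by
  refine le_antisymm (Nat.sInf_le h1) ?_
  by_contra h
  push_neg at h
  exact h2 (sg_mem_of_conductor_le ⟨N + 1, h1⟩ N (by omega))

lemma sg_infinite {S : Set ℕ} {N : ℕ} (h : ∀ n, N ≤ n → n ∈ S) : {n | n ∈ S}.Infinite :=
  (Set.Ici_infinite N).mono (fun n hn => h n hn)

lemma sg_gaps_finite {S : Set ℕ} {c : ℕ} (hc : ∀ n, c ≤ n → n ∈ S) : Sᶜ.Finite :=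
  (Set.finite_Iio c).subset (fun m hm => by
    by_contra h
    simp only [Set.mem_Iio, not_lt] at h
    exact hm (hc m h))

lemma sg_count_eq {S : Set ℕ} [DecidablePred (· ∈ S)] {c n : ℕ}
    (hc : ∀ m, c ≤ m → m ∈ S) (hn : c ≤ n) :
    Nat.count (· ∈ S) n = n - Sᶜ.ncard := by
  have hfin : Sᶜ.Finite := sg_gaps_finite hc
  have hfs : (Finset.range n).filter (fun m => ¬ m ∈ S) = hfin.toFinset := by
    ext m
    simp only [Finset.mem_filter, Finset.mem_range, Set.Finite.mem_toFinset, Set.mem_compl_iff]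
    constructor
    · rintro ⟨_, h⟩; exact h
    · intro h
      refine ⟨?_, h⟩
      by_contra hlt
      exact h (hc m (by omega))
  have hcard := Finset.card_filter_add_card_filter_not
    (s := Finset.range n) (p := fun m => m ∈ S)
  rw [Nat.count_eq_card_filter_range, Set.ncard_eq_toFinset_card _ hfin]
  rw [hfs] at hcard
  simp only [Finset.card_range] at hcard
  omega

lemma sg_genus_le {S : Set ℕ} {c : ℕ} (hc : ∀ n, c ≤ n → n ∈ S) : Sᶜ.ncard ≤ c := by
  have hfin : Sᶜ.Finite := sg_gaps_finite hc
  calc Sᶜ.ncard ≤ (Set.Iio c).ncard := Set.ncard_le_ncard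
        (fun m hm => by
          by_contra h
          simp only [Set.mem_Iio, not_lt] at h
          exact hm (hc m h)) (Set.finite_Iio c)
    _ = c := by rw [← Finset.coe_range, Set.ncard_coe_finset, Finset.card_range]

lemma sg_elem_eq {S : Set ℕ} (hS : IsNumericalSemigroup S) (t : ℕ) :
    sgElem S (sgRank S + t) = sgConductor S + t := by
  classical
  have hc : ∀ n, sgConductor S ≤ n → n ∈ S := sg_mem_of_conductor_le hS.2.2
  have hmem : sgConductor S + t ∈ S := hc _ (by omega)
  have hcount : Nat.count (· ∈ S) (sgConductor S + t) = sgRank S + t := by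
    rw [sg_count_eq hc (by omega)]
    have := sg_genus_le hc
    unfold sgRank sgGenus
    omega
  have := Nat.nth_count (p := (· ∈ S)) hmem
  rw [hcount] at this
  exact this

lemma sg_elemT_lt {S : Set ℕ} (hS : IsNumericalSemigroup S) {s j : ℕ} (hj : j < s) :
    sgElem (S \ {sgElem S s}) j = sgElem S j := by
  classical
  have hinf : {n | n ∈ S}.Infinite := sg_infinite (hS.2.2.choose_spec)
  have hmemj : sgElem S j ∈ S := Nat.nth_mem_of_infinite hinf j
  have hlt : sgElem S j < sgElem S s := (Nat.nth_lt_nth hinf).mpr hj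
  have hmemT : sgElem S j ∈ S \ {sgElem S s} := ⟨hmemj, by simp; omega⟩
  have hcount : Nat.count (· ∈ S \ {sgElem S s}) (sgElem S j) = j := by
    have h1 : Nat.count (· ∈ S \ {sgElem S s}) (sgElem S j)
        = Nat.count (· ∈ S) (sgElem S j) := by
      rw [Nat.count_eq_card_filter_range, Nat.count_eq_card_filter_range]
      congr 1
      apply Finset.filter_congr
      intro m hm
      simp only [Finset.mem_range] at hm
      simp only [Set.mem_diff, Set.mem_singleton_iff]
      constructor
      · rintro ⟨h, _⟩; exact h
      · intro h; exact ⟨h, by omega⟩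
    rw [h1]
    exact Nat.count_nth_of_infinite hinf j
  have h2 := Nat.nth_count (p := (· ∈ S \ {sgElem S s})) hmemT
  rw [hcount] at h2
  exact h2

lemma sg_elemT_ge {S : Set ℕ} (hS : IsNumericalSemigroup S) {s j : ℕ}
    (hgen : sgElem S s ∈ S) (hgt : sgConductor S < sgElem S s)
    (hks : sgRank S < s) (hj : s ≤ j) :
    sgElem (S \ {sgElem S s}) j = sgElem S s + 1 + (j - s) := by
  classical
  set μ := sgElem S s with hμdef
  set c := sgConductor S
  set g := sgGenus S
  have hc : ∀ n, c ≤ n → n ∈ S := sg_mem_of_conductor_le hS.2.2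
  have hgle : g ≤ c := sg_genus_le hc
  have hμval : μ = c + (s - sgRank S) := by
    have := sg_elem_eq hS (s - sgRank S)
    rw [show sgRank S + (s - sgRank S) = s by omega] at this
    exact this
  set n := μ + 1 + (j - s) with hndef
  have hnS : n ∈ S := hc n (by omega)
  have hmemT : n ∈ S \ {μ} := ⟨hnS, by simp; omega⟩
  have hcount : Nat.count (· ∈ S \ {μ}) n = j := by
    have herase : (Finset.range n).filter (· ∈ S \ {μ})
        = ((Finset.range n).filter (· ∈ S)).erase μ := by
      ext m
      simp only [Finset.mem_filter, Finset.mem_range, Finset.mem_erase,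
        Set.mem_diff, Set.mem_singleton_iff]
      tauto
    have hμmem : μ ∈ (Finset.range n).filter (· ∈ S) := by
      simp only [Finset.mem_filter, Finset.mem_range]
      exact ⟨by omega, hgen⟩
    have hcS : Nat.count (· ∈ S) n = n - g := sg_count_eq hc (by omega)
    rw [Nat.count_eq_card_filter_range, herase, Finset.card_erase_of_mem hμmem]
    rw [Nat.count_eq_card_filter_range] at hcS
    have hrk : sgRank S = c - g := rfl
    omega
  have := Nat.nth_count (p := (· ∈ S \ {μ})) hmemT
  rw [hcount] at this
  exact this

theorem statement7 (S : Set ℕ) (hS : IsNumericalSemigroup S)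
    (s : ℕ) (hgen : IsMinimalGenerator S (sgElem S s))
    (hgt : sgConductor S < sgElem S s) :
    IsNumericalSemigroup (S \ {sgElem S s}) ∧
    sgConductor (S \ {sgElem S s}) = sgElem S s + 1 ∧
    sgRank (S \ {sgElem S s}) = s ∧
    (∀ p : ℕ, sgRank S ≤ p → p ≤ s - 1 → ∀ y : ℕ,
      (IsSeed (S \ {sgElem S s}) p y ↔
        ((p = s - 1 ∧ (y = sgElem S s + 1 ∨ y = sgElem S s + 2)) ∨
         (p = s - 2 ∧ y = sgElem S s + 1)))) := by
  classical
  set μ := sgElem S s with hμdef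
  set c := sgConductor S with hcdef
  set g := sgGenus S with hgdef
  set k := sgRank S with hkdef
  set T := S \ {μ} with hTdef
  have hc : ∀ n, c ≤ n → n ∈ S := sg_mem_of_conductor_le hS.2.2
  have hgle : g ≤ c := sg_genus_le hc
  have hrk : k = c - g := rfl
  have hinf : {n | n ∈ S}.Infinite := sg_infinite (hS.2.2.choose_spec)
  have hμS : μ ∈ S := hgen.1
  have hμ0 : μ ≠ 0 := hgen.2.1
  have hElem : ∀ t, sgElem S (k + t) = c + t := sg_elem_eq hS
  have hks : k < s := by
    by_contra hco
    push_neg at hco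
    have h1 : sgElem S s ≤ sgElem S k := (Nat.nth_le_nth hinf).mpr hco
    have h2 : sgElem S k = c := by simpa using hElem 0
    omega
  have hμval : μ = c + (s - k) := by
    have := hElem (s - k)
    rw [show k + (s - k) = s by omega] at this
    exact this
  -- T is a numerical semigroup
  have hμT : μ ∉ T := by simp [hTdef]
  have hTcof : ∀ n, μ + 1 ≤ n → n ∈ T := by
    intro n hn
    exact ⟨hc n (by omega), by simp; omega⟩
  have hTnum : IsNumericalSemigroup T := by
    refine ⟨⟨hS.1, by simp; omega⟩, ?_, ⟨μ + 1, hTcof⟩⟩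
    rintro a ⟨haS, haμ⟩ b ⟨hbS, hbμ⟩
    simp only [Set.mem_singleton_iff] at haμ hbμ
    refine ⟨hS.2.1 a haS b hbS, ?_⟩
    simp only [Set.mem_singleton_iff]
    intro hab
    rcases Nat.eq_zero_or_pos a with ha0 | ha0
    · exact hbμ (by omega)
    rcases Nat.eq_zero_or_pos b with hb0 | hb0
    · exact haμ (by omega)
    exact hgen.2.2 ⟨a, haS, b, hbS, by omega, by omega, hab⟩
  -- conductor of T
  have hconT : sgConductor T = μ + 1 := sg_conductor_eq hTcof hμT
  -- genus of T
  have hgfin : Sᶜ.Finite := sg_gaps_finite hc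
  have hgT : sgGenus T = g + 1 := by
    have hTc : Tᶜ = insert μ Sᶜ := by
      ext n
      simp only [hTdef, Set.mem_compl_iff, Set.mem_diff, Set.mem_singleton_iff,
        Set.mem_insert_iff]
      tauto
    rw [sgGenus, hTc, Set.ncard_insert_of_notMem (by simpa using hμS) hgfin]
    rfl
  -- rank of T
  have hrankT : sgRank T = s := by
    rw [sgRank, hconT, hgT]
    omega
  refine ⟨hTnum, hconT, hrankT, ?_⟩
  -- element formulas for T
  have hE : ∀ j, k ≤ j → j < s → sgElem T j = c + (j - k) := by
    intro j hkj hjs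
    rw [hTdef, hμdef, sg_elemT_lt hS hjs]
    have := hElem (j - k)
    rw [show k + (j - k) = j by omega] at this
    exact this
  have hE' : ∀ j, s ≤ j → sgElem T j = μ + 1 + (j - s) := by
    intro j hj
    exact sg_elemT_ge hS hμS hgt hks hj
  -- seeds
  intro p hp1 hp2 y
  have hps : p < s := by omega
  have hTp : sgElem T p = c + (p - k) := hE p hp1 hps
  constructor
  · rintro ⟨hy, hvio⟩
    rw [hconT] at hy
    rcases (by omega : p + 1 = s ∨ p + 2 = s ∨ p + 3 ≤ s) with hd | hd | hd
    · -- p = s - 1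
      left
      refine ⟨by omega, ?_⟩
      by_contra hco
      push_neg at hco
      have hy3 : μ + 3 ≤ y := by omega
      exact hvio s (s + (y - μ - 3)) (by omega) (by omega)
        (by rw [hE' (s + (y - μ - 3)) (by omega)]; omega)
        (by rw [hTp, hE' s le_rfl, hE' (s + (y - μ - 3)) (by omega)]; omega)
    · -- p = s - 2
      right
      refine ⟨by omega, ?_⟩
      by_contra hco
      have hy2 : μ + 2 ≤ y := by omega
      exact hvio (s - 1) (s + (y - μ - 2)) (by omega) (by omega)
        (by rw [hE' (s + (y - μ - 2)) (by omega)]; omega)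
        (by rw [hTp, hE (s - 1) (by omega) (by omega),
              hE' (s + (y - μ - 2)) (by omega)]; omega)
    · -- p ≤ s - 3 : always a contradiction
      exfalso
      rcases (by omega : y ≤ μ + (s - p) - 2 ∨ y = μ + (s - p) - 1 ∨ μ + (s - p) ≤ y)
        with ht | ht | ht
      · exact hvio (s - (s - p - (y - μ) - 1)) (s - 1) (by omega) (by omega)
          (by rw [hE (s - 1) (by omega) (by omega)]; omega)
          (by rw [hTp, hE (s - (s - p - (y - μ) - 1)) (by omega) (by omega),
                hE (s - 1) (by omega) (by omega)]; omega)
      · exact hvio (s - 2) s (by omega) (by omega)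
          (by rw [hE' s le_rfl]; omega)
          (by rw [hTp, hE (s - 2) (by omega) (by omega), hE' s le_rfl]; omega)
      · exact hvio (s - 1) (s + (y - μ - (s - p))) (by omega) (by omega)
          (by rw [hE' (s + (y - μ - (s - p))) (by omega)]; omega)
          (by rw [hTp, hE (s - 1) (by omega) (by omega),
                hE' (s + (y - μ - (s - p))) (by omega)]; omega)
  · rintro (⟨hp, hy | hy⟩ | ⟨hp, hy⟩)
    · -- p = s-1, y = μ+1
      refine ⟨by rw [hconT]; omega, ?_⟩
      intro i j hpi hij hjy heq
      have hsi : s ≤ i := by omega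
      rw [hE' j (by omega)] at hjy
      omega
    · -- p = s-1, y = μ+2
      refine ⟨by rw [hconT]; omega, ?_⟩
      intro i j hpi hij hjy heq
      have hsi : s ≤ i := by omega
      have hjs : j = s := by
        rw [hE' j (by omega)] at hjy
        omega
      have his : i = s := by omega
      rw [hTp, his, hjs, hE' s le_rfl] at heq
      omega
    · -- p = s-2, y = μ+1
      refine ⟨by rw [hconT]; omega, ?_⟩
      intro i j hpi hij hjy heq
      have hjs : j < s := by
        by_contra hco
        push_neg at hco
        rw [hE' j hco] at hjy
        omega
      have hij' : i = s - 1 ∧ j = s - 1 := by omega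
      rw [hTp, hij'.1, hij'.2, hE (s - 1) (by omega) (by omega)] at heq
      omega
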